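/- Let Y ⊆ S^{n-1} be a finite set of unit vectors such that the inner product of any two distinct elements of Y lies in {0, α, -α} for some real α with 0 < α < 1, and suppose |Y| > 2n. Then 1/α is an integer. -/

import Mathlib

open Polynomial Matrix

section Helpers

variable {ι : Type*} [Fintype ι] [DecidableEq ι]

private lemma aux_charpoly_diagonal (v : ι → ℝ) :
    (Matrix.diagonal v).charpoly = ∏ i, (X - C (v i)) := by
  have h : charmatrix (Matrix.diagonal v) = Matrix.diagonal (fun i => X - C (v i)) := by
    ext i j
    by_cases hij : i = j
    · subst hij; simp [charmatrix_apply_eq]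
    · simp [charmatrix_apply_ne _ _ _ hij, Matrix.diagonal_apply_ne _ hij]
  rw [Matrix.charpoly, h, Matrix.det_diagonal]

private lemma aux_charpoly_conj (P M Q : Matrix ι ι ℝ) (h1 : P * Q = 1) :
    (P * M * Q).charpoly = M.charpoly := by
  have hmap : ∀ A B : Matrix ι ι ℝ, (A * B).map (C : ℝ →+* ℝ[X]) = A.map C * B.map C :=
    fun A B => Matrix.map_mul
  have hcm : charmatrix (P * M * Q) = P.map C * charmatrix M * Q.map C := by
    rw [charmatrix, charmatrix]
    rw [mul_sub, sub_mul]
    congr 1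
    · rw [show P.map (C : ℝ →+* ℝ[X]) * Matrix.scalar ι (X : ℝ[X]) = Matrix.scalar ι X * P.map C from
        (Matrix.scalar_commute X (fun r => Commute.all X r) (P.map C)).symm]
      rw [mul_assoc, ← hmap, h1, Matrix.map_one (C : ℝ →+* ℝ[X]) (map_zero _) (map_one _), mul_one]
    · simp only [RingHom.mapMatrix_apply]
      rw [hmap, hmap]
  rw [Matrix.charpoly, hcm, Matrix.det_mul, Matrix.det_mul, Matrix.charpoly]
  rw [mul_comm (P.map C).det _, mul_assoc, ← Matrix.det_mul, ← hmap, h1]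
  simp [Matrix.map_one (C : ℝ →+* ℝ[X]) (map_zero _) (map_one _)]

private lemma aux_rank_conj (P M Q : Matrix ι ι ℝ) (h1 : P * Q = 1) (h2 : Q * P = 1) :
    (P * M * Q).rank = M.rank := by
  apply le_antisymm
  · calc (P * M * Q).rank ≤ (M * Q).rank := by
          rw [mul_assoc]; exact Matrix.rank_mul_le_right _ _
      _ ≤ M.rank := Matrix.rank_mul_le_left _ _
  · have hM : M = Q * (P * M * Q) * P := by
      simp only [mul_assoc]; rw [h2, mul_one, ← mul_assoc, h2, one_mul]
    calc M.rank = (Q * (P * M * Q) * P).rank := by rw [← hM]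
      _ ≤ (P * M * Q).rank := le_trans (by rw [mul_assoc]; exact Matrix.rank_mul_le_right _ _)
          (Matrix.rank_mul_le_left _ _)

/-- A real number which is a root of multiplicity more than half the degree of a monic integer
polynomial is an integer. -/
private lemma aux_int_of_big_mult (q : Polynomial ℤ) (hm : q.Monic) (lam : ℝ) (d : ℕ)
    (hd : (X - C lam) ^ d ∣ q.map (Int.castRingHom ℝ)) (h2 : q.natDegree < 2 * d) :
    ∃ m : ℤ, lam = m := by
  have hmapR : q.map (Int.castRingHom ℝ) ≠ 0 := (hm.map _).ne_zero
  have haev : Polynomial.aeval lam q = 0 := by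
    have : (X - C lam) ∣ q.map (Int.castRingHom ℝ) :=
      dvd_trans (dvd_pow_self _ (by omega : d ≠ 0)) hd
    have hroot : (q.map (Int.castRingHom ℝ)).IsRoot lam := by
      rcases this with ⟨s, hs⟩
      simp [hs, IsRoot]
    rw [aeval_def, ← eval_map]
    simpa [algebraMap_int_eq] using hroot
  have hInt : IsIntegral ℤ lam := ⟨q, hm, by rwa [← aeval_def]⟩
  have hIntQ : IsIntegral ℚ lam := hInt.tower_top
  set f := minpoly ℚ lam with hf
  have hfmonic : f.Monic := minpoly.monic hIntQ
  have hfirr : Irreducible f := minpoly.irreducible hIntQ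
  have hfsep : f.Separable := hfirr.separable
  have hfmapsep : (f.map (algebraMap ℚ ℝ)).Separable := hfsep.map
  set q' : Polynomial ℚ := q.map (Int.castRingHom ℚ) with hq'
  have hq'monic : q'.Monic := hm.map _
  have hq'map : q'.map (algebraMap ℚ ℝ) = q.map (Int.castRingHom ℝ) := by
    rw [hq', Polynomial.map_map,
      Subsingleton.elim ((algebraMap ℚ ℝ).comp (Int.castRingHom ℚ)) (Int.castRingHom ℝ)]
  have hfm1 : ∀ x : ℝ, rootMultiplicity x (f.map (algebraMap ℚ ℝ)) ≤ 1 :=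
    fun x => rootMultiplicity_le_one_of_separable hfmapsep x
  have hfmap0 : f.map (algebraMap ℚ ℝ) ≠ 0 := (hfmonic.map _).ne_zero
  have hdvd : ∀ k, k ≤ d → f ^ k ∣ q' := by
    intro k hk
    induction k with
    | zero => simp
    | succ k ih =>
      obtain ⟨s, hs⟩ := ih (by omega)
      have hs0 : s ≠ 0 := by
        rintro rfl; rw [mul_zero] at hs; exact hq'monic.ne_zero hs
      have hsmap0 : s.map (algebraMap ℚ ℝ) ≠ 0 :=
        (Polynomial.map_ne_zero_iff (algebraMap ℚ ℝ).injective).mpr hs0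
      have hrm : d ≤ rootMultiplicity lam (q'.map (algebraMap ℚ ℝ)) := by
        rw [Polynomial.le_rootMultiplicity_iff (by rw [hq'map]; exact hmapR)]
        rw [hq'map]; exact hd
      rw [hs, Polynomial.map_mul, Polynomial.map_pow] at hrm
      rw [rootMultiplicity_mul (by
        rw [← Polynomial.map_pow, ← Polynomial.map_mul, ← hs]
        rw [Polynomial.map_ne_zero_iff (algebraMap ℚ ℝ).injective]
        exact hq'monic.ne_zero)] at hrm
      have hpow : ∀ j : ℕ, rootMultiplicity lam ((f.map (algebraMap ℚ ℝ)) ^ j) ≤ j := by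
        intro j
        induction j with
        | zero => simp
        | succ j ihj =>
          rw [pow_succ, rootMultiplicity_mul (mul_ne_zero (pow_ne_zero j hfmap0) hfmap0)]
          have := hfm1 lam
          omega
      have hsroot : 1 ≤ rootMultiplicity lam (s.map (algebraMap ℚ ℝ)) := by
        have := hpow k
        omega
      have hsaev : Polynomial.aeval lam s = 0 := by
        rw [aeval_def, ← eval_map]
        exact (rootMultiplicity_pos hsmap0).mp (by omega)
      obtain ⟨t, ht⟩ := minpoly.dvd ℚ lam hsaev
      exact ⟨t, by rw [hs, ht, pow_succ]; ring⟩
  obtain ⟨r, hr⟩ := hdvd d le_rfl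
  have hq'0 : q' ≠ 0 := hq'monic.ne_zero
  have hdeg : (f ^ d).natDegree ≤ q'.natDegree :=
    Polynomial.natDegree_le_of_dvd ⟨r, hr⟩ hq'0
  rw [Polynomial.natDegree_pow] at hdeg
  have hq'deg : q'.natDegree = q.natDegree := hm.natDegree_map _
  have hfd1 : f.natDegree = 1 := by
    have h1 : 1 ≤ f.natDegree := minpoly.natDegree_pos hIntQ
    by_contra h
    have : 2 ≤ f.natDegree := by omega
    nlinarith [hdeg, hq'deg ▸ hdeg]
  obtain ⟨r0, hr0⟩ := (minpoly.natDegree_eq_one_iff (A := ℚ) (B := ℝ) (x := lam)).mp hfd1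
  have hr0int : IsIntegral ℤ r0 := by
    apply IsIntegral.tower_bot_of_field (B := ℝ)
    rwa [hr0]
  obtain ⟨m, hm2⟩ := IsIntegrallyClosed.isIntegral_iff.mp hr0int
  refine ⟨m, ?_⟩
  rw [← hr0, ← hm2]
  rfl

end Helpers

open scoped RealInnerProductSpace

/-- If `Y` is a set of unit vectors in `ℝⁿ` whose pairwise inner products lie in
`{0, α, -α}` with `0 < α < 1` and `|Y| > 2n`, then `1/α` is an integer. -/
theorem three_distance_integrality {n : ℕ}
    (Y : Finset (EuclideanSpace ℝ (Fin n)))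
    (hYsphere : ∀ x ∈ Y, ‖x‖ = 1)
    (α : ℝ) (hα0 : 0 < α) (hα1 : α < 1)
    (hinner : ∀ x ∈ Y, ∀ y ∈ Y, x ≠ y → ⟪x, y⟫ ∈ ({0, α, -α} : Set ℝ))
    (hcard : 2 * n < Y.card) :
    ∃ m : ℤ, (1 / α : ℝ) = m := by
  classical
  have hα : (α : ℝ) ≠ 0 := ne_of_gt hα0
  set ι := {x // x ∈ Y}
  set N := Y.card with hN
  have hcardι : Fintype.card ι = N := Fintype.card_coe Y
  -- the "adjacency" matrix
  set B : Matrix ι ι ℝ := Matrix.of fun x y => if x = y then 0 else ⟪(x : EuclideanSpace ℝ (Fin n)), (y : EuclideanSpace ℝ (Fin n))⟫ / α with hBdef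
  set Bz : Matrix ι ι ℤ := Matrix.of fun x y =>
    if x = y then 0 else if ⟪(x : EuclideanSpace ℝ (Fin n)), (y : EuclideanSpace ℝ (Fin n))⟫ = α then 1 else
      if ⟪(x : EuclideanSpace ℝ (Fin n)), (y : EuclideanSpace ℝ (Fin n))⟫ = -α then -1 else 0 with hBzdef
  have hBmap : B = Bz.map (Int.castRingHom ℝ) := by
    ext x y
    simp only [hBdef, hBzdef, Matrix.map_apply, Matrix.of_apply]
    by_cases hxy : x = y
    · rw [if_pos hxy, if_pos hxy]; norm_num
    · have hne : (x : EuclideanSpace ℝ (Fin n)) ≠ (y : EuclideanSpace ℝ (Fin n)) :=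
        fun h => hxy (Subtype.ext h)
      have h3 := hinner x x.2 y y.2 hne
      simp only [Set.mem_insert_iff, Set.mem_singleton_iff] at h3
      rw [if_neg hxy, if_neg hxy]
      rcases h3 with h | h | h
      · rw [h, if_neg hα0.ne, if_neg (by linarith : (0:ℝ) ≠ -α)]
        norm_num
      · rw [h, if_pos rfl, div_self hα]
        norm_num
      · rw [h, if_neg (by linarith : -α ≠ α), if_pos rfl, neg_div, div_self hα]
        norm_num
  have hB : B.IsHermitian := by
    ext x y
    simp only [Matrix.conjTranspose_apply, hBdef, star_trivial, Matrix.of_apply]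
    by_cases hxy : x = y
    · subst hxy; simp
    · rw [if_neg (fun h => hxy (Eq.symm h)), if_neg hxy, real_inner_comm]
  -- the Gram matrix
  set G : Matrix ι ι ℝ := 1 + α • B with hGdef
  set W : Matrix ι (Fin n) ℝ := Matrix.of fun x i => (x : EuclideanSpace ℝ (Fin n)) i with hWdef
  have hGgram : G = W * Wᵀ := by
    ext x y
    have hinn : ⟪(x : EuclideanSpace ℝ (Fin n)), (y : EuclideanSpace ℝ (Fin n))⟫ = ∑ i, (x : EuclideanSpace ℝ (Fin n)) i * (y : EuclideanSpace ℝ (Fin n)) i := by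
      simp [PiLp.inner_apply, RCLike.inner_apply, mul_comm]
    by_cases hxy : x = y
    · subst hxy
      have h1 : ⟪(x : EuclideanSpace ℝ (Fin n)), (x : EuclideanSpace ℝ (Fin n))⟫ = 1 := by
        rw [real_inner_self_eq_norm_sq, hYsphere x x.2]; norm_num
      simp only [hGdef, Matrix.add_apply, Matrix.smul_apply, Matrix.one_apply_eq, hBdef,
        eq_self_iff_true, if_true, smul_zero, add_zero, Matrix.mul_apply,
        Matrix.transpose_apply, hWdef, Matrix.of_apply]
      rw [← hinn, h1]
    · simp only [hGdef, Matrix.add_apply, Matrix.smul_apply, Matrix.one_apply_ne hxy, hBdef,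
        if_neg hxy, Matrix.mul_apply, Matrix.transpose_apply, hWdef, smul_eq_mul, Matrix.of_apply]
      rw [← hinn]
      field_simp
      ring
  have hrankG : G.rank ≤ n := by
    rw [hGgram]
    exact le_trans (Matrix.rank_mul_le_left _ _)
      (le_trans (Matrix.rank_le_card_width W) (by simp))
  -- spectral theorem
  set U : Matrix ι ι ℝ := (hB.eigenvectorUnitary : Matrix ι ι ℝ) with hUdef
  set μ : ι → ℝ := hB.eigenvalues with hμdef
  have hU1 : U * star U = 1 := (Matrix.mem_unitaryGroup_iff).mp hB.eigenvectorUnitary.2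
  have hU2 : star U * U = 1 := (Matrix.mem_unitaryGroup_iff').mp hB.eigenvectorUnitary.2
  have hspec : B = U * Matrix.diagonal μ * star U := by
    have h := hB.spectral_theorem
    have h2 : (RCLike.ofReal ∘ μ : ι → ℝ) = μ := by funext i; simp
    rwa [h2] at h
  set v : ι → ℝ := fun j => 1 + α * μ j with hvdef
  have hGspec : G = U * Matrix.diagonal v * star U := by
    have hdiag : Matrix.diagonal v = 1 + α • Matrix.diagonal μ := by
      rw [hvdef]
      ext i j
      by_cases hij : i = j
      · subst hij; simp
      · simp [Matrix.diagonal_apply_ne _ hij, Matrix.one_apply_ne hij]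
    rw [hGdef, hdiag, mul_add, add_mul, mul_one, hU1, Matrix.mul_smul, Matrix.smul_mul, ← hspec]
  -- counting zero eigenvalues of G
  have hrankdiag : (Matrix.diagonal v).rank ≤ n := by
    rw [← aux_rank_conj U (Matrix.diagonal v) (star U) hU1 hU2, ← hGspec]
    exact hrankG
  have hcount : (Finset.univ.filter (fun j : ι => v j ≠ 0)).card ≤ n := by
    have := Matrix.rank_diagonal v
    rw [this] at hrankdiag
    rwa [Fintype.card_subtype] at hrankdiag
  set lam : ℝ := -(1/α) with hlamdef
  have hvzero : ∀ j, v j = 0 ↔ μ j = lam := by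
    intro j
    show 1 + α * μ j = 0 ↔ μ j = -(1/α)
    constructor
    · intro h
      apply mul_left_cancel₀ hα
      have h2 : α * -(1/α) = -1 := by field_simp
      rw [h2]; linarith
    · intro h
      rw [h]
      rw [mul_neg, mul_one_div_cancel hα]; ring
  set s : Finset ι := Finset.univ.filter (fun j => μ j = lam) with hsdef
  have hscard : s.card + (Finset.univ.filter (fun j : ι => v j ≠ 0)).card = N := by
    rw [hsdef]
    have : (Finset.univ.filter (fun j : ι => μ j = lam)) =
        (Finset.univ.filter (fun j : ι => ¬ v j ≠ 0)) := by
      apply Finset.filter_congr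
      intro j _
      simp [hvzero j]
    rw [this, add_comm, Finset.card_filter_add_card_filter_not, Finset.card_univ, hcardι]
  -- the charpoly of B
  have hcharB : B.charpoly = ∏ j, (X - C (μ j)) := by
    rw [hspec, aux_charpoly_conj U (Matrix.diagonal μ) (star U) hU1, aux_charpoly_diagonal]
  have hdvd : (X - C lam) ^ s.card ∣ Bz.charpoly.map (Int.castRingHom ℝ) := by
    rw [← Matrix.charpoly_map, ← hBmap, hcharB]
    rw [← Finset.prod_filter_mul_prod_filter_not Finset.univ (fun j => μ j = lam)]
    apply Dvd.dvd.mul_right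
    rw [show (∏ j ∈ Finset.univ.filter (fun j => μ j = lam), (X - C (μ j))) =
        ∏ j ∈ Finset.univ.filter (fun j => μ j = lam), (X - C lam) from
      Finset.prod_congr rfl (fun j hj => by rw [(Finset.mem_filter.mp hj).2])]
    rw [Finset.prod_const, hsdef]
  have hdegBz : Bz.charpoly.natDegree = N := by
    rw [Matrix.charpoly_natDegree_eq_dim, hcardι]
  obtain ⟨m, hm⟩ := aux_int_of_big_mult Bz.charpoly (Bz.charpoly_monic) lam s.card hdvd
    (by omega)
  exact ⟨-m, by push_cast; rw [show (1/α:ℝ) = -lam from by rw [hlamdef]; ring, hm]⟩
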